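/- (Completeness of type inference) If N is a β-normal form, the judgement N : σ in context Γ is derivable in system SM_r, and Infer(N) = (Γ', σ'), then there exists a type substitution s such that s(Γ') = Γ and s(σ') = σ. -/

import Mathlib

set_option maxHeartbeats 1000000

namespace DBIT

/-- Terms of the λ_dB-calculus.  `var k` denotes the de Bruijn index `k+1`
(de Bruijn indices are *positive* natural numbers). -/
inductive Tm : Type
  | var : ℕ → Tm
  | app : Tm → Tm → Tm
  | lam : Tm → Tm
deriving DecidableEq

/-- The set of free indices of a term. -/
def FI : Tm → Finset ℕ
  | .var k => {k + 1}
  | .app M N => FI M ∪ FI N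
  | .lam M => ((FI M).filter (fun n => 1 < n)).image (fun n => n - 1)

/-- `supFI M` is the greatest free index of `M` (and `0` if `FI M = ∅`). -/
def supFI (M : Tm) : ℕ := (FI M).sup id

/-- Lift with cut-off: increment all indices that are free under `k` binders. -/
def liftRec (k : ℕ) : Tm → Tm
  | .var n => if k ≤ n then .var (n + 1) else .var n
  | .app M N => .app (liftRec k M) (liftRec k N)
  | .lam M => .lam (liftRec (k + 1) M)

/-- The lift `M⁺` of `M`: increment all free indices by one. -/
def lift (M : Tm) : Tm := liftRec 0 M

/-- β-substitution: `subst k N M` is `{k+1 / N} M`. -/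
def subst (k : ℕ) (N : Tm) : Tm → Tm
  | .app M1 M2 => .app (subst k N M1) (subst k N M2)
  | .lam M1 => .lam (subst (k + 1) (lift N) M1)
  | .var m => if k < m then .var (m - 1) else if m = k then N else .var m

/-- One-step β-reduction: the compatible closure of the β-contraction
`(λ.M) N →β {1/N} M`. -/
inductive Beta : Tm → Tm → Prop
  | beta (M N : Tm) : Beta (.app (.lam M) N) (subst 0 N M)
  | appL {M M' : Tm} (N : Tm) : Beta M M' → Beta (.app M N) (.app M' N)
  | appR (M : Tm) {N N' : Tm} : Beta N N' → Beta (.app M N) (.app M N')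
  | lam {M M' : Tm} : Beta M M' → Beta (.lam M) (.lam M')

/-- A term is a β-normal form when no β-reduction applies to it. -/
def IsNF (M : Tm) : Prop := ∀ N, ¬ Beta M N

/-- `appList h [N1, …, Nm] = (h N1 ⋯ Nm)`. -/
def appList (h : Tm) (Ns : List Tm) : Tm := Ns.foldl .app h

/-! ### Restricted intersection types -/

mutual
  /-- The set `T` of restricted intersection types: `τ ::= α | u → τ`. -/
  inductive Ty : Type
    | tvar : ℕ → Ty
    | arr : IU → Ty → Ty
  /-- The set `U`: `u ::= ω | u ∧ u | τ`. -/
  inductive IU : Type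
    | omega : IU
    | inter : IU → IU → IU
    | ofTy : Ty → IU
end

mutual
  /-- Equality of types in the quotient by commutativity/associativity of `∧`
  and neutrality of `ω`. -/
  inductive TyEq : Ty → Ty → Prop
    | refl (τ) : TyEq τ τ
    | symm {τ σ} : TyEq τ σ → TyEq σ τ
    | trans {τ σ ρ} : TyEq τ σ → TyEq σ ρ → TyEq τ ρ
    | arr {u v τ σ} : UEq u v → TyEq τ σ → TyEq (.arr u τ) (.arr v σ)
  /-- Equality of `U`-elements in the quotient: `∧` is commutative, associative
  and has `ω` as neutral element. -/
  inductive UEq : IU → IU → Prop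
    | refl (u) : UEq u u
    | symm {u v} : UEq u v → UEq v u
    | trans {u v w} : UEq u v → UEq v w → UEq u w
    | comm (u v) : UEq (.inter u v) (.inter v u)
    | assoc (u v w) : UEq (.inter (.inter u v) w) (.inter u (.inter v w))
    | omega_left (u) : UEq (.inter .omega u) u
    | inter {u u' v v'} : UEq u u' → UEq v v' → UEq (.inter u v) (.inter u' v')
    | ofTy {τ σ} : TyEq τ σ → UEq (.ofTy τ) (.ofTy σ)
end

/-- Contexts: finite lists of elements of `U`. -/
abbrev Ctx := List IU

/-- Equality of contexts in the quotient (componentwise). -/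
def CtxEq (Γ Δ : Ctx) : Prop := List.Forall₂ UEq Γ Δ

/-- The extension of `∧` to contexts (with `nil` neutral). -/
def ctxAnd : Ctx → Ctx → Ctx
  | [], Δ => Δ
  | u :: Γ, [] => u :: Γ
  | u :: Γ, v :: Δ => .inter u v :: ctxAnd Γ Δ

/-- `ω^n`: the context consisting of `n` copies of `ω`. -/
def omegas (n : ℕ) : Ctx := List.replicate n .omega

/-- `arrChain [σ1,…,σm] τ = σ1 → ⋯ → σm → τ`. -/
def arrChain (σs : List Ty) (τ : Ty) : Ty := σs.foldr (fun σ t => .arr (.ofTy σ) t) τ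

/-- `interOf [σ1,…,σn] = σ1 ∧ ⋯ ∧ σn` (and `ω` for the empty list). -/
def interOf : List Ty → IU
  | [] => .omega
  | σ :: σs => σs.foldl (fun u τ => .inter u (.ofTy τ)) (.ofTy σ)

mutual
  /-- Type variables occurring in a type. -/
  def tvT : Ty → Finset ℕ
    | .tvar a => {a}
    | .arr u τ => tvU u ∪ tvT τ
  /-- Type variables occurring in a `U`-element. -/
  def tvU : IU → Finset ℕ
    | .omega => ∅
    | .inter u v => tvU u ∪ tvU v
    | .ofTy τ => tvT τ
end

/-- Type variables occurring in a context. -/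
def tvC (Γ : Ctx) : Finset ℕ := Γ.foldr (fun u s => tvU u ∪ s) ∅

mutual
  /-- Application of a type substitution to a type. -/
  def substT (s : ℕ → Ty) : Ty → Ty
    | .tvar a => s a
    | .arr u τ => .arr (substU s u) (substT s τ)
  /-- Application of a type substitution to a `U`-element. -/
  def substU (s : ℕ → Ty) : IU → IU
    | .omega => .omega
    | .inter u v => .inter (substU s u) (substU s v)
    | .ofTy τ => .ofTy (substT s τ)
end

/-- Application of a type substitution to a context. -/
def substC (s : ℕ → Ty) (Γ : Ctx) : Ctx := Γ.map (substU s)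

/-! ### The typing systems SM and SM_r

Since types are quotiented by commutativity/associativity of `∧` and
neutrality of `ω`, the systems include a conversion rule for this
equality of types/contexts. -/

/-- The typing system `SM`.  Recall that `Tm.var k` is the de Bruijn index `k+1`. -/
inductive SM : Tm → Ctx → Ty → Prop
  | var (τ : Ty) : SM (.var 0) [.ofTy τ] τ
  | varn {k Γ τ} : SM (.var k) Γ τ → SM (.var (k + 1)) (.omega :: Γ) τ
  | arrI {M u Γ τ} : SM M (u :: Γ) τ → SM (.lam M) Γ (.arr u τ)
  | arrI' {M τ} : SM M [] τ → SM (.lam M) [] (.arr .omega τ)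
  | arrE' {M1 M2 Γ Δ τ σ} : SM M1 Γ (.arr .omega τ) → SM M2 Δ σ →
      SM (.app M1 M2) (ctxAnd Γ Δ) τ
  | arrE {M1 M2 : Tm} {Γ : Ctx} {τ : Ty} (σs : List Ty) (Δs : List Ctx)
      (hne : σs ≠ []) (hlen : Δs.length = σs.length)
      (h1 : SM M1 Γ (.arr (interOf σs) τ))
      (h2 : ∀ i, i < σs.length → SM M2 (Δs.getD i []) (σs.getD i (.tvar 0))) :
      SM (.app M1 M2) (Δs.foldl ctxAnd Γ) τ
  | conv {M Γ Γ' τ τ'} : SM M Γ τ → CtxEq Γ Γ' → TyEq τ τ' → SM M Γ' τ'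

/-- The typing system `SM_r`: as `SM` but with rule (var) replaced by (var_r). -/
inductive SMr : Tm → Ctx → Ty → Prop
  | varr (σs : List Ty) (a : ℕ) :
      SMr (.var 0) [.ofTy (arrChain σs (.tvar a))] (arrChain σs (.tvar a))
  | varn {k Γ τ} : SMr (.var k) Γ τ → SMr (.var (k + 1)) (.omega :: Γ) τ
  | arrI {M u Γ τ} : SMr M (u :: Γ) τ → SMr (.lam M) Γ (.arr u τ)
  | arrI' {M τ} : SMr M [] τ → SMr (.lam M) [] (.arr .omega τ)
  | arrE' {M1 M2 Γ Δ τ σ} : SMr M1 Γ (.arr .omega τ) → SMr M2 Δ σ →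
      SMr (.app M1 M2) (ctxAnd Γ Δ) τ
  | arrE {M1 M2 : Tm} {Γ : Ctx} {τ : Ty} (σs : List Ty) (Δs : List Ctx)
      (hne : σs ≠ []) (hlen : Δs.length = σs.length)
      (h1 : SMr M1 Γ (.arr (interOf σs) τ))
      (h2 : ∀ i, i < σs.length → SMr M2 (Δs.getD i []) (σs.getD i (.tvar 0))) :
      SMr (.app M1 M2) (Δs.foldl ctxAnd Γ) τ
  | conv {M Γ Γ' τ τ'} : SMr M Γ τ → CtxEq Γ Γ' → TyEq τ τ' → SMr M Γ' τ'

/-- The type variables of a typing (pair context/type). -/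
def tvP (Γ : Ctx) (τ : Ty) : Finset ℕ := tvC Γ ∪ tvT τ

/-- The type-inference algorithm `Infer` for β-normal forms, as a relation
(the algorithm is nondeterministic in the choice of the fresh type variables;
freshness is expressed by the disjointness side conditions). -/
inductive InferR : Tm → Ctx → Ty → Prop
  | var (k a : ℕ) : InferR (.var k) (omegas k ++ [.ofTy (.tvar a)]) (.tvar a)
  | lamCons {N : Tm} {u : IU} {Γ : Ctx} {σ : Ty} :
      InferR N (u :: Γ) σ → InferR (.lam N) Γ (.arr u σ)
  | lamNil {N : Tm} {σ : Ty} :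
      InferR N [] σ → InferR (.lam N) [] (.arr .omega σ)
  | app (k : ℕ) (Ns : List Tm) (Γs : List Ctx) (σs : List Ty) (a : ℕ)
      (hne : Ns ≠ [])
      (hlen1 : Γs.length = Ns.length) (hlen2 : σs.length = Ns.length)
      (h : ∀ i, i < Ns.length →
        InferR (Ns.getD i (.var 0)) (Γs.getD i []) (σs.getD i (.tvar 0)))
      (hdisj : ∀ i j, i < Ns.length → j < Ns.length → i ≠ j →
        Disjoint (tvP (Γs.getD i []) (σs.getD i (.tvar 0)))
                 (tvP (Γs.getD j []) (σs.getD j (.tvar 0))))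
      (ha : ∀ i, i < Ns.length → a ∉ tvP (Γs.getD i []) (σs.getD i (.tvar 0))) :
      InferR (appList (.var k) Ns)
        (Γs.foldl ctxAnd (omegas k ++ [.ofTy (arrChain σs (.tvar a))]))
        (.tvar a)

/-! ### The subsets T_C, T_NF, U_C and C-types -/

mutual
  /-- `ρ ∈ T_C ::= α | φ→ρ` with `φ ∈ T_NF`. -/
  inductive IsTC : Ty → Prop
    | tvar (a : ℕ) : IsTC (.tvar a)
    | arr {φ ρ} : IsTNF φ → IsTC ρ → IsTC (.arr (.ofTy φ) ρ)
  /-- `φ ∈ T_NF ::= α | v→φ` with `v ∈ U_C`. -/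
  inductive IsTNF : Ty → Prop
    | tvar (a : ℕ) : IsTNF (.tvar a)
    | arr {v φ} : IsUC v → IsTNF φ → IsTNF (.arr v φ)
  /-- `v ∈ U_C ::= ω | v∧v | ρ` with `ρ ∈ T_C`. -/
  inductive IsUC : IU → Prop
    | omega : IsUC .omega
    | inter {u v} : IsUC u → IsUC v → IsUC (.inter u v)
    | ofTy {ρ} : IsTC ρ → IsUC (.ofTy ρ)
end

/-- `Γ ∈ C`: all elements of `Γ` lie in `U_C`. -/
def IsCCtx (Γ : Ctx) : Prop := ∀ u ∈ Γ, IsUC u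

/-- C-types: `tj Γ φ` is `Γ ⊢ φ` and `cj Δ` is `Δ ⊢`. -/
inductive CTy : Type
  | tj : Ctx → Ty → CTy
  | cj : Ctx → CTy

mutual
  /-- Number of positive occurrences of the variable `a` in a type. -/
  def posT : Ty → ℕ → ℕ
    | .tvar b, a => if b = a then 1 else 0
    | .arr u τ, a => negU u a + posT τ a
  /-- Number of negative occurrences of the variable `a` in a type. -/
  def negT : Ty → ℕ → ℕ
    | .tvar _, _ => 0
    | .arr u τ, a => posU u a + negT τ a
  /-- Number of positive occurrences of the variable `a` in a `U`-element. -/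
  def posU : IU → ℕ → ℕ
    | .omega, _ => 0
    | .inter u v, a => posU u a + posU v a
    | .ofTy τ, a => posT τ a
  /-- Number of negative occurrences of the variable `a` in a `U`-element. -/
  def negU : IU → ℕ → ℕ
    | .omega, _ => 0
    | .inter u v, a => negU u a + negU v a
    | .ofTy τ, a => negT τ a
end

/-- Positive occurrences in a context. -/
def posC (Γ : Ctx) (a : ℕ) : ℕ := (Γ.map (fun u => posU u a)).sum
/-- Negative occurrences in a context. -/
def negC (Γ : Ctx) (a : ℕ) : ℕ := (Γ.map (fun u => negU u a)).sum

/-- Positive occurrences of a variable in a C-type (polarity is flipped in the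
context part). -/
def posCT : CTy → ℕ → ℕ
  | .tj Γ φ, a => negC Γ a + posT φ a
  | .cj Γ, a => negC Γ a

/-- Negative occurrences of a variable in a C-type. -/
def negCT : CTy → ℕ → ℕ
  | .tj Γ φ, a => posC Γ a + negT φ a
  | .cj Γ, a => posC Γ a

/-- Type variables of a C-type. -/
def tvCT : CTy → Finset ℕ
  | .tj Γ φ => tvC Γ ∪ tvT φ
  | .cj Γ => tvC Γ

/-- A C-type is closed when each of its type variables has exactly one positive
and exactly one negative occurrence. -/
def IsClosed (T : CTy) : Prop := ∀ a ∈ tvCT T, posCT T a = 1 ∧ negCT T a = 1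

/-- The final (rightmost) type-variable occurrence of a type. -/
def finalT : Ty → ℕ
  | .tvar a => a
  | .arr _ φ => finalT φ

/-- The final (rightmost) type-variable occurrence of a `U`-element, if any. -/
def finalU : IU → Option ℕ
  | .omega => none
  | .inter u v => (finalU v).orElse (fun _ => finalU u)
  | .ofTy τ => some (finalT τ)

/-- Left subtypes of a type. -/
def Lty : Ty → Set IU
  | .tvar _ => ∅
  | .arr .omega φ => Lty φ
  | .arr v φ => insert v (Lty φ)

/-- Left subtypes of a context. -/
def Lctx : Ctx → Set IU
  | [] => ∅
  | .omega :: Γ => Lctx Γ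
  | v :: Γ => insert v (Lctx Γ)

/-- The set `L(T)` of left subtypes of a C-type. -/
def LCT : CTy → Set IU
  | .tj Γ φ => Lctx Γ ∪ Lty φ
  | .cj Γ => Lctx Γ

/-- A C-type `Γ ⊢ φ` is finally closed when the final occurrence of `φ` is
also the final occurrence of some type in `L(T)`. -/
def IsFC : CTy → Prop
  | .tj Γ φ => ∃ v ∈ LCT (.tj Γ φ), finalU v = some (finalT φ)
  | .cj _ => False

/-- Equality of C-types in the quotient. -/
def CTyEq : CTy → CTy → Prop
  | .tj Γ φ, .tj Δ ψ => CtxEq Γ Δ ∧ TyEq φ ψ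
  | .cj Γ, .cj Δ => CtxEq Γ Δ
  | _, _ => False

/-- `Γ` contains an element which is not (equal to) `ω`, i.e. `Γ` is not of the
form `ω^n` with `n ≥ 1` (nor `nil`). -/
def hasNonOmega (Γ : Ctx) : Prop := ∃ u ∈ Γ, ¬ UEq u .omega

/-- `Held T' T`: the C-type `T'` is held in `T = Γ ⊢ φ`, i.e. `T' = Γ' ⊢` or
`T' = Γ' ⊢ φ` with `Γ = Γ' ∧ Δ` for some context `Δ`, where `Γ'` is not of the
form `ω^n` (`Γ'` may be `nil` in the second case). -/
inductive Held : CTy → CTy → Prop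
  | cj {Γ' Δ Γ : Ctx} {φ : Ty} (hC : IsCCtx Γ') (hne : Γ' ≠ [])
      (hω : hasNonOmega Γ') (h : CtxEq Γ (ctxAnd Γ' Δ)) :
      Held (.cj Γ') (.tj Γ φ)
  | tj {Γ' Δ Γ : Ctx} {φ : Ty} (hC : IsCCtx Γ')
      (hω : Γ' = [] ∨ hasNonOmega Γ') (h : CtxEq Γ (ctxAnd Γ' Δ)) :
      Held (.tj Γ' φ) (.tj Γ φ)

/-- `T'` is strictly held in `T`. -/
def StrictlyHeld (T' T : CTy) : Prop := Held T' T ∧ ¬ CTyEq T' T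

/-- A C-type is minimally closed when no closed C-type is strictly held in it. -/
def IsMC (T : CTy) : Prop := ¬ ∃ T', StrictlyHeld T' T ∧ IsClosed T'

/-- A C-type is complete when it is closed, finally closed and minimally closed. -/
def IsComplete (T : CTy) : Prop := IsClosed T ∧ IsFC T ∧ IsMC T

/-- Principal C-types (Definition of principal). -/
inductive Principal : CTy → Prop
  | var (k a : ℕ)
      (hcomp : IsComplete (.tj (omegas k ++ [.ofTy (.tvar a)]) (.tvar a))) :
      Principal (.tj (omegas k ++ [.ofTy (.tvar a)]) (.tvar a))
  | lamNil {φ : Ty} (hcomp : IsComplete (.tj [] (.arr .omega φ)))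
      (hp : Principal (.tj [] φ)) :
      Principal (.tj [] (.arr .omega φ))
  | lam {Γ : Ctx} {v : IU} {φ : Ty} (hcomp : IsComplete (.tj Γ (.arr v φ)))
      (hcond : Γ ≠ [] ∨ ¬ UEq v .omega)
      (hp : Principal (.tj (v :: Γ) φ)) :
      Principal (.tj Γ (.arr v φ))
  | app {Γ : Ctx} {a : ℕ} (k : ℕ) (Γs : List Ctx) (φs : List Ty)
      (hcomp : IsComplete (.tj Γ (.tvar a)))
      (hne : φs ≠ []) (hlen : Γs.length = φs.length)
      (hC : ∀ Δ ∈ Γs, IsCCtx Δ)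
      (hΓ : CtxEq Γ (Γs.foldl ctxAnd (omegas k ++ [.ofTy (arrChain φs (.tvar a))])))
      (hp : ∀ i, i < φs.length →
        Principal (.tj (Γs.getD i []) (φs.getD i (.tvar 0)))) :
      Principal (.tj Γ (.tvar a))

/-- `FO(α, Γ)`: the set of pairs `(i, Γ_i)` (1-indexed) such that `α` is the
final occurrence of `Γ_i`. -/
def FO (a : ℕ) (Γ : Ctx) : Set (ℕ × IU) :=
  {p | 1 ≤ p.1 ∧ p.1 ≤ Γ.length ∧ p.2 = Γ.getD (p.1 - 1) .omega ∧
       finalU p.2 = some a}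

/-! ### Auxiliary material for the completeness proof -/

attribute [local instance] Classical.propDecidable in
instance : IsRefl IU UEq := ⟨UEq.refl⟩
instance : IsRefl Ty TyEq := ⟨TyEq.refl⟩
instance : IsTrans Ty TyEq := ⟨fun _ _ _ => TyEq.trans⟩

lemma CtxEq.refl (Γ : Ctx) : CtxEq Γ Γ := List.forall₂_refl Γ

lemma CtxEq.symm : ∀ {Γ Δ}, CtxEq Γ Δ → CtxEq Δ Γ := by
  intro Γ Δ h
  induction h with
  | nil => exact List.Forall₂.nil
  | cons h1 _ ih => exact List.Forall₂.cons h1.symm ih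

lemma CtxEq.trans : ∀ {Γ Δ Θ}, CtxEq Γ Δ → CtxEq Δ Θ → CtxEq Γ Θ := by
  intro Γ Δ Θ h1
  induction h1 generalizing Θ with
  | nil => intro h2; cases h2; exact List.Forall₂.nil
  | cons h1 _ ih =>
    intro h2; cases h2 with
    | cons h2 h2' => exact List.Forall₂.cons (h1.trans h2) (ih h2')

instance : IsRefl Ctx CtxEq := ⟨CtxEq.refl⟩

lemma CtxEq.length_eq {Γ Δ} (h : CtxEq Γ Δ) : Γ.length = Δ.length :=
  List.Forall₂.length_eq h

/-- The multiset of `T`-components of an element of `U`. -/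
def comps : IU → Multiset Ty
  | .omega => 0
  | .inter u v => comps u + comps v
  | .ofTy τ => {τ}

lemma relRefl (m : Multiset Ty) : Multiset.Rel TyEq m m :=
  Multiset.rel_refl_of_refl_on fun x _ => TyEq.refl x

lemma relSymm {m1 m2 : Multiset Ty} (h : Multiset.Rel TyEq m1 m2) :
    Multiset.Rel TyEq m2 m1 :=
  (Multiset.rel_flip.mpr h).mono fun _ _ _ _ hab => hab.symm

lemma relOfTy {τ σ : Ty} (h : TyEq τ σ) :
    Multiset.Rel TyEq (comps (.ofTy τ)) (comps (.ofTy σ)) := by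
  show Multiset.Rel TyEq ({τ} : Multiset Ty) ({σ} : Multiset Ty)
  rw [← Multiset.cons_zero τ, ← Multiset.cons_zero σ]
  exact Multiset.Rel.cons h Multiset.Rel.zero

/-- Structural characterization of `TyEq`. -/
def tyR : Ty → Ty → Prop
  | .tvar a, .tvar b => a = b
  | .arr u τ, .arr v σ => UEq u v ∧ TyEq τ σ
  | _, _ => False

lemma tyR_refl : ∀ τ : Ty, tyR τ τ
  | .tvar _ => rfl
  | .arr u t => ⟨UEq.refl u, TyEq.refl t⟩

lemma tyR_symm : ∀ {τ σ : Ty}, tyR τ σ → tyR σ τ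
  | .tvar _, .tvar _, h => h.symm
  | .arr _ _, .arr _ _, h => ⟨h.1.symm, h.2.symm⟩
  | .tvar _, .arr _ _, h => h.elim
  | .arr _ _, .tvar _, h => h.elim

lemma tyR_trans : ∀ {τ σ ρ : Ty}, tyR τ σ → tyR σ ρ → tyR τ ρ
  | .tvar _, .tvar _, .tvar _, h1, h2 => h1.trans h2
  | .arr _ _, .arr _ _, .arr _ _, h1, h2 => ⟨h1.1.trans h2.1, h1.2.trans h2.2⟩
  | .tvar _, .arr _ _, _, h1, _ => h1.elim
  | .arr _ _, .tvar _, _, h1, _ => h1.elim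
  | .tvar _, .tvar _, .arr _ _, _, h2 => h2.elim
  | .arr _ _, .arr _ _, .tvar _, _, h2 => h2.elim

theorem ueq_comps {u v : IU} (h : UEq u v) : Multiset.Rel TyEq (comps u) (comps v) :=
  UEq.rec (motive_1 := fun τ σ _ => tyR τ σ)
    (motive_2 := fun u v _ => Multiset.Rel TyEq (comps u) (comps v))
    (fun τ => tyR_refl τ)
    (fun _ ih => tyR_symm ih)
    (fun _ _ ih1 ih2 => tyR_trans ih1 ih2)
    (fun a a1 _ _ => ⟨a, a1⟩)
    (fun u => relRefl (comps u))
    (fun _ ih => relSymm ih)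
    (fun _ _ ih1 ih2 => Multiset.Rel.trans _ ih1 ih2)
    (fun u v => by show Multiset.Rel TyEq (comps u + comps v) (comps v + comps u)
                   rw [add_comm]; exact relRefl _)
    (fun u v w => by
      show Multiset.Rel TyEq (comps u + comps v + comps w) (comps u + (comps v + comps w))
      rw [add_assoc]; exact relRefl _)
    (fun u => by show Multiset.Rel TyEq (0 + comps u) (comps u)
                 rw [zero_add]; exact relRefl _)
    (fun _ _ ih1 ih2 => Multiset.Rel.add ih1 ih2)
    (fun a _ => relOfTy a)
    h

theorem tyeq_tyR {τ σ : Ty} (h : TyEq τ σ) : tyR τ σ :=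
  TyEq.rec (motive_1 := fun τ σ _ => tyR τ σ)
    (motive_2 := fun u v _ => Multiset.Rel TyEq (comps u) (comps v))
    (fun τ => tyR_refl τ)
    (fun _ ih => tyR_symm ih)
    (fun _ _ ih1 ih2 => tyR_trans ih1 ih2)
    (fun a a1 _ _ => ⟨a, a1⟩)
    (fun u => relRefl (comps u))
    (fun _ ih => relSymm ih)
    (fun _ _ ih1 ih2 => Multiset.Rel.trans _ ih1 ih2)
    (fun u v => by show Multiset.Rel TyEq (comps u + comps v) (comps v + comps u)
                   rw [add_comm]; exact relRefl _)
    (fun u v w => by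
      show Multiset.Rel TyEq (comps u + comps v + comps w) (comps u + (comps v + comps w))
      rw [add_assoc]; exact relRefl _)
    (fun u => by show Multiset.Rel TyEq (0 + comps u) (comps u)
                 rw [zero_add]; exact relRefl _)
    (fun _ _ ih1 ih2 => Multiset.Rel.add ih1 ih2)
    (fun a _ => relOfTy a)
    h

lemma ueq_omega_ofTy {σ} (h : UEq .omega (.ofTy σ)) : False := by
  have := ueq_comps h
  simp only [comps] at this
  rw [Multiset.rel_zero_left] at this
  simp at this

lemma comps_foldl : ∀ (l : List Ty) (acc : IU),
    comps (l.foldl (fun u τ => .inter u (.ofTy τ)) acc) = comps acc + ↑l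
  | [], acc => by simp
  | τ :: l, acc => by
    rw [List.foldl_cons, comps_foldl l]
    show comps acc + ({τ} : Multiset Ty) + ↑l = comps acc + ↑(τ :: l)
    rw [add_assoc, Multiset.singleton_add]
    rfl

lemma comps_interOf (σs : List Ty) : comps (interOf σs) = ↑σs := by
  cases σs with
  | nil => rfl
  | cons σ σs =>
    show comps (σs.foldl _ (.ofTy σ)) = _
    rw [comps_foldl]
    show ({σ} : Multiset Ty) + ↑σs = ↑(σ :: σs)
    rw [Multiset.singleton_add]; rfl

lemma interOf_eq_single {es : List Ty} {σ : Ty} (h : UEq (interOf es) (.ofTy σ)) :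
    ∃ e, es = [e] ∧ TyEq e σ := by
  have h1 := ueq_comps h
  rw [comps_interOf] at h1
  have h2 : comps (IU.ofTy σ) = σ ::ₘ 0 := rfl
  rw [h2] at h1
  obtain ⟨e, es', he, hrel, heq⟩ := Multiset.rel_cons_right.mp h1
  rw [Multiset.rel_zero_right] at hrel
  subst hrel
  have : (es : Multiset Ty) = {e} := by rw [heq]; rfl
  rw [Multiset.coe_eq_singleton] at this
  exact ⟨e, this, he⟩

lemma tyeq_arr_arr {u τ v σ} (h : TyEq (.arr u τ) (.arr v σ)) : UEq u v ∧ TyEq τ σ :=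
  tyeq_tyR h

lemma tyeq_arr_tvar {u τ b} (h : TyEq (.arr u τ) (.tvar b)) : False := tyeq_tyR h

/-! ### Congruence lemmas -/

lemma ctxAnd_congr : ∀ {A A' B B'}, CtxEq A A' → CtxEq B B' → CtxEq (ctxAnd A B) (ctxAnd A' B') := by
  intro A A' B B' h1
  induction h1 generalizing B B' with
  | nil => intro h2; exact h2
  | cons hu _ ih =>
    intro h2
    cases h2 with
    | nil => exact List.Forall₂.cons hu (by assumption)
    | cons hv h2' => exact List.Forall₂.cons (UEq.inter hu hv) (ih h2')

lemma foldl_ctxAnd_congr : ∀ {As Bs : List Ctx}, List.Forall₂ CtxEq As Bs →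
    ∀ {A B}, CtxEq A B → CtxEq (As.foldl ctxAnd A) (Bs.foldl ctxAnd B) := by
  intro As Bs h
  induction h with
  | nil => intro A B h; exact h
  | cons h1 _ ih => intro A B h; exact ih (ctxAnd_congr h h1)

lemma arrChain_congr : ∀ {xs ys}, List.Forall₂ TyEq xs ys →
    ∀ {t t'}, TyEq t t' → TyEq (arrChain xs t) (arrChain ys t') := by
  intro xs ys h
  induction h with
  | nil => intro t t' h; exact h
  | cons h1 _ ih => intro t t' h; exact TyEq.arr (UEq.ofTy h1) (ih h)

lemma arrChain_append (l1 l2 : List Ty) (t : Ty) :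
    arrChain (l1 ++ l2) t = arrChain l1 (arrChain l2 t) := by
  simp [arrChain, List.foldr_append]

/-! ### Substitution lemmas -/

mutual
theorem substT_congr (s s' : ℕ → Ty) : ∀ τ : Ty, (∀ x ∈ tvT τ, s x = s' x) → substT s τ = substT s' τ
  | .tvar a, h => h a (by simp [tvT])
  | .arr u τ, h => by
    show Ty.arr (substU s u) (substT s τ) = Ty.arr (substU s' u) (substT s' τ)
    rw [substU_congr s s' u (fun x hx => h x (by simp [tvT]; exact Or.inl hx)),
        substT_congr s s' τ (fun x hx => h x (by simp [tvT]; exact Or.inr hx))]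
theorem substU_congr (s s' : ℕ → Ty) : ∀ u : IU, (∀ x ∈ tvU u, s x = s' x) → substU s u = substU s' u
  | .omega, _ => rfl
  | .inter u v, h => by
    show IU.inter (substU s u) (substU s v) = IU.inter (substU s' u) (substU s' v)
    rw [substU_congr s s' u (fun x hx => h x (by simp [tvU]; exact Or.inl hx)),
        substU_congr s s' v (fun x hx => h x (by simp [tvU]; exact Or.inr hx))]
  | .ofTy τ, h => by
    show IU.ofTy (substT s τ) = IU.ofTy (substT s' τ)
    rw [substT_congr s s' τ (fun x hx => h x (by simp [tvU]; exact hx))]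
end

lemma substC_congr (s s' : ℕ → Ty) : ∀ Γ : Ctx, (∀ x ∈ tvC Γ, s x = s' x) → substC s Γ = substC s' Γ
  | [], _ => rfl
  | u :: Γ, h => by
    show substU s u :: substC s Γ = substU s' u :: substC s' Γ
    rw [substU_congr s s' u (fun x hx => h x (by simp [tvC]; exact Or.inl hx)),
        substC_congr s s' Γ (fun x hx => h x (by simp [tvC]; exact Or.inr hx))]

lemma substC_ctxAnd (s : ℕ → Ty) : ∀ (A B : Ctx),
    substC s (ctxAnd A B) = ctxAnd (substC s A) (substC s B)
  | [], B => rfl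
  | u :: A, [] => rfl
  | u :: A, v :: B => by
    show IU.inter (substU s u) (substU s v) :: substC s (ctxAnd A B) = _
    rw [substC_ctxAnd s A B]; rfl

lemma substC_foldl (s : ℕ → Ty) : ∀ (Γs : List Ctx) (A : Ctx),
    substC s (Γs.foldl ctxAnd A) = (Γs.map (substC s)).foldl ctxAnd (substC s A)
  | [], A => rfl
  | Γ :: Γs, A => by
    show substC s (Γs.foldl ctxAnd (ctxAnd A Γ)) = _
    rw [substC_foldl s Γs, substC_ctxAnd]; rfl

lemma substC_omegas (s : ℕ → Ty) (k : ℕ) : substC s (omegas k) = omegas k := by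
  simp only [substC, omegas, List.map_replicate]
  congr 1

lemma substC_append (s : ℕ → Ty) (A B : Ctx) :
    substC s (A ++ B) = substC s A ++ substC s B := List.map_append

lemma substT_arrChain (s : ℕ → Ty) : ∀ (l : List Ty) (t : Ty),
    substT s (arrChain l t) = arrChain (l.map (substT s)) (substT s t)
  | [], t => rfl
  | x :: l, t => by
    show Ty.arr (.ofTy (substT s x)) (substT s (arrChain l t)) = _
    rw [substT_arrChain s l]; rfl

/-! ### Length / greatest-free-index lemmas -/

lemma supFI_var (k : ℕ) : supFI (.var k) = k + 1 := by
  simp [supFI, FI]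

lemma supFI_app (M N : Tm) : supFI (.app M N) = max (supFI M) (supFI N) := by
  simp [supFI, FI, Finset.sup_union]

lemma supFI_lam (M : Tm) : supFI (.lam M) = supFI M - 1 := by
  unfold supFI
  apply le_antisymm
  · apply Finset.sup_le
    intro b hb
    simp only [FI, Finset.mem_image, Finset.mem_filter] at hb
    obtain ⟨n, ⟨hn, _⟩, rfl⟩ := hb
    exact Nat.sub_le_sub_right (Finset.le_sup (f := id) hn) 1
  · rcases Nat.lt_or_ge ((FI M).sup id) 2 with h2 | h2
    · omega
    · have hne : (FI M).Nonempty := by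
        rcases Finset.eq_empty_or_nonempty (FI M) with h | h
        · rw [h] at h2; simp at h2
        · exact h
      obtain ⟨i, hi, hsup⟩ := Finset.exists_mem_eq_sup (FI M) hne id
      have : i - 1 ∈ FI (.lam M) := by
        simp only [FI, Finset.mem_image, Finset.mem_filter]
        exact ⟨i, ⟨hi, by simp [id] at hsup; omega⟩, rfl⟩
      have h3 := Finset.le_sup (f := id) this
      simp only [id] at h3 hsup
      omega

lemma ctxAnd_length : ∀ (A B : Ctx), (ctxAnd A B).length = max A.length B.length
  | [], B => by simp [ctxAnd]
  | u :: A, [] => by simp [ctxAnd]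
  | u :: A, v :: B => by
    show (ctxAnd A B).length + 1 = _
    rw [ctxAnd_length A B]
    simp [Nat.succ_max_succ]

lemma len_foldl_ctxAnd : ∀ (Γs : List Ctx) (A : Ctx),
    (Γs.foldl ctxAnd A).length = (Γs.map List.length).foldl max A.length
  | [], A => rfl
  | Γ :: Γs, A => by
    rw [List.foldl_cons, len_foldl_ctxAnd Γs, List.map_cons, List.foldl_cons,
      ctxAnd_length]

lemma foldl_max_const {c : ℕ} : ∀ (l : List ℕ), l ≠ [] → (∀ x ∈ l, x = c) →
    ∀ n, l.foldl max n = max n c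
  | [], h, _ => absurd rfl h
  | [x], _, hx => by simp [hx x (by simp)]
  | x :: y :: l, _, hx => by
    intro n
    rw [List.foldl_cons, foldl_max_const (y :: l) (by simp) (fun z hz => hx z (by simp [hz]))]
    rw [hx x (by simp)]
    omega

lemma omegas_length (k : ℕ) : (omegas k).length = k := by simp [omegas]

lemma supFI_appList : ∀ (Ns : List Tm) (h : Tm),
    supFI (appList h Ns) = (Ns.map supFI).foldl max (supFI h)
  | [], h => rfl
  | N :: Ns, h => by
    show supFI (appList (.app h N) Ns) = _
    rw [supFI_appList Ns, List.map_cons, List.foldl_cons, supFI_app]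

lemma smr_len {M Γ τ} (h : SMr M Γ τ) : Γ.length = supFI M := by
  induction h with
  | varr σs a => simp [supFI_var]
  | varn h ih => simp only [List.length_cons, supFI_var] at *; omega
  | arrI h ih =>
    simp only [List.length_cons, supFI_lam] at *
    omega
  | arrI' h ih => simp only [List.length_nil, supFI_lam] at *; omega
  | arrE' h1 h2 ih1 ih2 => rw [ctxAnd_length, supFI_app, ih1, ih2]
  | arrE σs Δs hne hlen h1 h2 ih1 ih2 =>
    rw [supFI_app, len_foldl_ctxAnd, ih1]
    rename_i M1 M2 Γ' τ'
    apply foldl_max_const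
    · simp only [ne_eq, List.map_eq_nil_iff]
      intro h; rw [h] at hlen; exact hne (List.length_eq_zero_iff.mp hlen.symm)
    · intro x hx
      rw [List.mem_map] at hx
      obtain ⟨Δ, hΔ, rfl⟩ := hx
      obtain ⟨i, hi, hget⟩ := List.mem_iff_getElem.mp hΔ
      have hi' : i < σs.length := by omega
      have := ih2 i hi'
      rwa [List.getD_eq_getElem _ _ hi, hget] at this
  | conv h hctx hty ih => rw [← hctx.length_eq, ih]

lemma infer_len {N Γ' σ'} (h : InferR N Γ' σ') : Γ'.length = supFI N := by
  induction h with
  | var k a => simp [omegas_length, supFI_var]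
  | lamCons h ih => simp only [List.length_cons, supFI_lam] at *; omega
  | lamNil h ih => simp only [List.length_nil, supFI_lam] at *; omega
  | app k Ns Γs σs a hne hlen1 hlen2 h hdisj ha ih =>
    rw [supFI_appList, len_foldl_ctxAnd, supFI_var]
    have hbase : (omegas k ++ [IU.ofTy (arrChain σs (.tvar a))]).length = k + 1 := by
      simp [omegas_length]
    rw [hbase]
    congr 1
    apply List.ext_getElem
    · simp [hlen1]
    · intro i h1 h2
      simp only [List.getElem_map]
      have hi : i < Ns.length := by simp at h2; omega
      have := ih i hi
      rw [List.getD_eq_getElem _ _ (by omega : i < Γs.length),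
          List.getD_eq_getElem _ _ (by omega : i < Ns.length)] at this
      exact this

/-! ### Inversion lemmas for SMr -/

lemma smr_var_inv {M Γ τ} (h : SMr M Γ τ) : ∀ k, M = .var k →
    ∃ cs b, CtxEq Γ (omegas k ++ [.ofTy (arrChain cs (.tvar b))]) ∧
      TyEq τ (arrChain cs (.tvar b)) := by
  induction h with
  | varr σs a =>
    intro k hk
    cases hk
    exact ⟨σs, a, CtxEq.refl _, TyEq.refl _⟩
  | varn h ih =>
    rename_i k0 Γ0 τ0
    intro k hk
    cases hk
    obtain ⟨cs, b, h1, h2⟩ := ih k0 rfl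
    refine ⟨cs, b, ?_, h2⟩
    show CtxEq (.omega :: Γ0) (omegas (k0 + 1) ++ _)
    have : omegas (k0 + 1) = .omega :: omegas k0 := by simp [omegas, List.replicate_succ]
    rw [this, List.cons_append]
    exact List.Forall₂.cons (UEq.refl _) h1
  | conv h hctx hty ih =>
    intro k hk
    obtain ⟨cs, b, h1, h2⟩ := ih k hk
    exact ⟨cs, b, hctx.symm.trans h1, hty.symm.trans h2⟩
  | arrI _ _ => exact fun k hk => by cases hk
  | arrI' _ _ => exact fun k hk => by cases hk
  | arrE' _ _ _ _ => exact fun k hk => by cases hk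
  | arrE _ _ _ _ _ _ _ _ => exact fun k hk => by cases hk

lemma smr_lam_inv {M Γ τ} (h : SMr M Γ τ) : ∀ M', M = .lam M' →
    (∃ u Γ₀ τ₀, SMr M' (u :: Γ₀) τ₀ ∧ CtxEq Γ Γ₀ ∧ TyEq τ (.arr u τ₀)) ∨
    (∃ τ₀, SMr M' [] τ₀ ∧ Γ = [] ∧ TyEq τ (.arr .omega τ₀)) := by
  induction h with
  | arrI h _ =>
    intro M' hM
    cases hM
    exact Or.inl ⟨_, _, _, h, CtxEq.refl _, TyEq.refl _⟩
  | arrI' h _ =>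
    intro M' hM
    cases hM
    exact Or.inr ⟨_, h, rfl, TyEq.refl _⟩
  | conv h hctx hty ih =>
    intro M' hM
    rcases ih M' hM with ⟨u, Γ₀, τ₀, h1, h2, h3⟩ | ⟨τ₀, h1, h2, h3⟩
    · exact Or.inl ⟨u, Γ₀, τ₀, h1, hctx.symm.trans h2, hty.symm.trans h3⟩
    · refine Or.inr ⟨τ₀, h1, ?_, hty.symm.trans h3⟩
      subst h2
      cases hctx; rfl
  | varr _ _ => exact fun M' hM => by cases hM
  | varn _ _ => exact fun M' hM => by cases hM
  | arrE' _ _ _ _ => exact fun M' hM => by cases hM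
  | arrE _ _ _ _ _ _ _ _ => exact fun M' hM => by cases hM

lemma smr_app_inv {M Γ τ} (h : SMr M Γ τ) : ∀ M1 M2, M = .app M1 M2 →
    ∃ (Γ₁ : Ctx) (u : IU) (τ₀ : Ty) (Δs : List Ctx) (es : List Ty),
      SMr M1 Γ₁ (.arr u τ₀) ∧ TyEq τ₀ τ ∧ CtxEq Γ (Δs.foldl ctxAnd Γ₁) ∧
      Δs.length = es.length ∧ es ≠ [] ∧
      (∀ i, i < es.length → SMr M2 (Δs.getD i []) (es.getD i (.tvar 0))) ∧
      (UEq u (interOf es) ∨ u = .omega) := by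
  induction h with
  | @arrE' M1' M2' Γ' Δ' τ' σ' h1 h2 _ _ =>
    intro M1 M2 hM
    cases hM
    refine ⟨Γ', .omega, τ', [Δ'], [σ'], h1, TyEq.refl _, CtxEq.refl _, rfl,
      by simp, ?_, Or.inr rfl⟩
    intro i hi
    simp only [List.length_singleton] at hi
    have : i = 0 := by omega
    subst this
    simpa using h2
  | @arrE M1' M2' Γ' τ' σs Δs hne hlen h1 h2 _ _ =>
    intro M1 M2 hM
    cases hM
    exact ⟨Γ', interOf σs, τ', Δs, σs, h1, TyEq.refl _, CtxEq.refl _, hlen, hne,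
      h2, Or.inl (UEq.refl _)⟩
  | conv h hctx hty ih =>
    intro M1 M2 hM
    obtain ⟨Γ₁, u, τ₀, Δs, es, h1, h2, h3, h4, h5, h6, h7⟩ := ih M1 M2 hM
    exact ⟨Γ₁, u, τ₀, Δs, es, h1, h2.trans hty, hctx.symm.trans h3, h4, h5, h6, h7⟩
  | varr _ _ => exact fun M1 M2 hM => by cases hM
  | varn _ _ => exact fun M1 M2 hM => by cases hM
  | arrI _ _ => exact fun M1 M2 hM => by cases hM
  | arrI' _ _ => exact fun M1 M2 hM => by cases hM

lemma getD_last {α} (l : List α) (x d : α) : (l ++ [x]).getD l.length d = x := by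
  rw [List.getD_eq_getElem _ _ (by simp)]
  exact List.getElem_concat_length rfl _

/-! ### The spine lemma -/

lemma smr_spine {k : ℕ} (Ns : List Tm) : ∀ {Γ τ}, SMr (appList (.var k) Ns) Γ τ →
    ∃ (Δs : List Ctx) (es rest : List Ty) (b : ℕ),
      Δs.length = Ns.length ∧ es.length = Ns.length ∧
      (∀ i, i < Ns.length →
        SMr (Ns.getD i (.var 0)) (Δs.getD i []) (es.getD i (.tvar 0))) ∧
      CtxEq Γ (Δs.foldl ctxAnd (omegas k ++ [.ofTy (arrChain (es ++ rest) (.tvar b))])) ∧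
      TyEq τ (arrChain rest (.tvar b)) := by
  induction Ns using List.reverseRecOn with
  | nil =>
    intro Γ τ h
    obtain ⟨cs, b, h1, h2⟩ := smr_var_inv h k rfl
    exact ⟨[], [], cs, b, rfl, rfl, fun i hi => absurd hi (Nat.not_lt_zero i), h1, h2⟩
  | append_singleton Ms Nm ih =>
    intro Γ τ h
    have happ : appList (.var k) (Ms ++ [Nm]) = .app (appList (.var k) Ms) Nm := by
      simp [appList, List.foldl_append]
    rw [happ] at h
    obtain ⟨Γ₁, u, τ₀, Δs0, es0, hM1, hτ₀, hΓ, hl0, hne0, htyp0, hu⟩ :=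
      smr_app_inv h _ _ rfl
    obtain ⟨Δs, es, rest, b, hlΔ, hles, htyps, hctx1, hty1⟩ := ih hM1
    cases rest with
    | nil => exact (tyeq_arr_tvar hty1).elim
    | cons r rest' =>
      obtain ⟨hur, hτ0'⟩ : UEq u (.ofTy r) ∧ TyEq τ₀ (arrChain rest' (.tvar b)) :=
        tyeq_tyR hty1
      rcases hu with hu | rfl
      · obtain ⟨e, rfl, her⟩ := interOf_eq_single (hu.symm.trans hur)
        have hl1 : Δs0.length = 1 := by rw [hl0]; rfl
        obtain ⟨Δ, rfl⟩ := List.length_eq_one_iff.mp hl1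
        have hNm : SMr Nm Δ e := by simpa using htyp0 0 (by simp)
        refine ⟨Δs ++ [Δ], es ++ [e], rest', b, by simp [hlΔ], by simp [hles],
          ?_, ?_, hτ₀.symm.trans hτ0'⟩
        · intro i hi
          simp only [List.length_append, List.length_singleton] at hi
          rcases Nat.lt_or_ge i Ms.length with h' | h'
          · rw [List.getD_append _ _ _ _ (by omega), List.getD_append _ _ _ _ (by omega),
              List.getD_append _ _ _ _ (by omega)]
            exact htyps i h'
          · have hieq : i = Ms.length := by omega
            subst hieq
            have g1 : (Ms ++ [Nm]).getD Ms.length (.var 0) = Nm := getD_last _ _ _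
            have g2 : (Δs ++ [Δ]).getD Ms.length [] = Δ := by
              rw [← hlΔ]; exact getD_last _ _ _
            have g3 : (es ++ [e]).getD Ms.length (.tvar 0) = e := by
              rw [← hles]; exact getD_last _ _ _
            rw [g1, g2, g3]
            exact hNm
        · rw [List.foldl_append]
          refine hΓ.trans (ctxAnd_congr ?_ (CtxEq.refl Δ))
          refine hctx1.trans ?_
          apply foldl_ctxAnd_congr (List.forall₂_refl Δs)
          apply List.rel_append (List.forall₂_refl (omegas k))
          refine List.Forall₂.cons (UEq.ofTy ?_) List.Forall₂.nil
          have heq : (es ++ [e]) ++ rest' = es ++ (e :: rest') := by simp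
          rw [heq]
          apply arrChain_congr ?_ (TyEq.refl _)
          exact List.rel_append (List.forall₂_refl es)
            (List.Forall₂.cons her.symm (List.forall₂_refl rest'))
      · exact (ueq_omega_ofTy hur).elim

/-! ### Gluing substitutions -/

/-- Combination of a family of substitutions with pairwise disjoint relevant
  domains, also sending `a` to `T0`. -/
def glue (a : ℕ) (T0 : Ty) (m : ℕ) (tv : ℕ → Finset ℕ) (S : ℕ → ℕ → Ty) : ℕ → Ty :=
  fun x => if x = a then T0 else
    match (List.range m).find? (fun i => decide (x ∈ tv i)) with
    | some i => S i x
    | none => .tvar x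

lemma glue_a (a : ℕ) (T0 : Ty) (m : ℕ) (tv : ℕ → Finset ℕ) (S : ℕ → ℕ → Ty) :
    glue a T0 m tv S a = T0 := by simp [glue]

lemma glue_eq {a : ℕ} {T0 : Ty} {m : ℕ} {tv : ℕ → Finset ℕ} {S : ℕ → ℕ → Ty}
    (hdisj : ∀ i j, i < m → j < m → i ≠ j → Disjoint (tv i) (tv j))
    (ha : ∀ i, i < m → a ∉ tv i) {i x} (hi : i < m) (hx : x ∈ tv i) :
    glue a T0 m tv S x = S i x := by
  have hxa : x ≠ a := fun h => ha i hi (h ▸ hx)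
  simp only [glue, if_neg hxa]
  cases hfind : (List.range m).find? (fun j => decide (x ∈ tv j)) with
  | none =>
    exfalso
    have := List.find?_eq_none.mp hfind i (List.mem_range.mpr hi)
    simp at this
    exact this hx
  | some j =>
    simp only []
    have hj1 := List.find?_some hfind
    have hj2 := List.mem_range.mp (List.mem_of_find?_eq_some hfind)
    simp only [decide_eq_true_eq] at hj1
    by_cases hji : j = i
    · subst hji; rfl
    · exact absurd hj1 (Finset.disjoint_left.mp (hdisj i j hi hj2 (fun h => hji h.symm)) hx)
/-- completeness of `Infer`. -/
theorem infer_complete {N : Tm} {Γ : Ctx} {σ : Ty} {Γ' : Ctx} {σ' : Ty}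
    (hnf : IsNF N) (h : SMr N Γ σ) (hinf : InferR N Γ' σ') :
    ∃ s : ℕ → Ty, CtxEq (substC s Γ') Γ ∧ TyEq (substT s σ') σ := by
  clear hnf
  induction hinf generalizing Γ σ with
  | var k a =>
    obtain ⟨cs, b, h1, h2⟩ := smr_var_inv h k rfl
    refine ⟨fun _ => arrChain cs (.tvar b), ?_, h2.symm⟩
    have heq : substC (fun _ => arrChain cs (.tvar b)) (omegas k ++ [.ofTy (.tvar a)])
        = omegas k ++ [.ofTy (arrChain cs (.tvar b))] := by
      rw [substC_append, substC_omegas]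
      rfl
    rw [heq]
    exact h1.symm
  | @lamCons N' u Γ'' σ₀ hN ih =>
    rcases smr_lam_inv h _ rfl with ⟨v, Γ₀, τ₀, h1, h2, h3⟩ | ⟨τ₀, h1, h2, h3⟩
    · obtain ⟨s, hs1, hs2⟩ := ih h1
      cases hs1 with
      | cons hu ht =>
        refine ⟨s, CtxEq.trans ht h2.symm, ?_⟩
        show TyEq (.arr (substU s u) (substT s σ₀)) σ
        exact (TyEq.arr hu hs2).trans h3.symm
    · exfalso
      have l1 := smr_len h1
      have l2 := infer_len hN
      simp only [List.length_nil, List.length_cons] at l1 l2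
      omega
  | @lamNil N' σ₀ hN ih =>
    rcases smr_lam_inv h _ rfl with ⟨v, Γ₀, τ₀, h1, h2, h3⟩ | ⟨τ₀, h1, h2, h3⟩
    · exfalso
      have l1 := smr_len h1
      have l2 := infer_len hN
      simp only [List.length_nil, List.length_cons] at l1 l2
      omega
    · obtain ⟨s, hs1, hs2⟩ := ih h1
      subst h2
      refine ⟨s, List.Forall₂.nil, ?_⟩
      show TyEq (.arr .omega (substT s σ₀)) σ
      exact (TyEq.arr (UEq.refl _) hs2).trans h3.symm
  | app k Ns Γs σs a hne hlen1 hlen2 hinfs hdisj ha ih =>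
    obtain ⟨Δs, es, rest, b, hlΔ, hles, htyps, hctx, hty⟩ := smr_spine Ns h
    have hex : ∀ i, ∃ s : ℕ → Ty, i < Ns.length →
        CtxEq (substC s (Γs.getD i [])) (Δs.getD i []) ∧
        TyEq (substT s (σs.getD i (.tvar 0))) (es.getD i (.tvar 0)) := by
      intro i
      by_cases hi : i < Ns.length
      · obtain ⟨s, hs⟩ := ih i hi (htyps i hi)
        exact ⟨s, fun _ => hs⟩
      · exact ⟨fun _ => .tvar 0, fun hc => absurd hc hi⟩
    choose S hS using hex
    set s : ℕ → Ty := glue a (arrChain rest (.tvar b)) Ns.length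
      (fun i => tvP (Γs.getD i []) (σs.getD i (.tvar 0))) S with hsdef
    have hsa : s a = arrChain rest (.tvar b) := glue_a _ _ _ _ _
    have hagree : ∀ i, i < Ns.length →
        ∀ x ∈ tvP (Γs.getD i []) (σs.getD i (.tvar 0)), s x = S i x :=
      fun i hi x hx => glue_eq hdisj ha hi hx
    refine ⟨s, ?_, ?_⟩
    · rw [substC_foldl, substC_append, substC_omegas]
      have hbase : substC s [IU.ofTy (arrChain σs (.tvar a))]
          = [IU.ofTy (arrChain (σs.map (substT s)) (arrChain rest (.tvar b)))] := by
        show [IU.ofTy (substT s (arrChain σs (.tvar a)))] = _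
        rw [substT_arrChain]
        show [IU.ofTy (arrChain _ (s a))] = _
        rw [hsa]
      rw [hbase]
      refine CtxEq.trans ?_ hctx.symm
      apply foldl_ctxAnd_congr
      · rw [List.forall₂_iff_get]
        refine ⟨by simp [hlen1, hlΔ], ?_⟩
        intro i h1 h2
        have hi : i < Ns.length := by
          simp only [List.length_map] at h1; omega
        have e1 : (Γs.map (substC s)).get ⟨i, h1⟩ = substC s (Γs.getD i []) := by
          simp only [List.get_eq_getElem, List.getElem_map]
          rw [List.getD_eq_getElem _ _ (by simp at h1 ⊢; omega)]
        have e2 : Δs.get ⟨i, h2⟩ = Δs.getD i [] := by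
          simp only [List.get_eq_getElem]
          rw [List.getD_eq_getElem _ _ h2]
        rw [e1, e2]
        rw [substC_congr s (S i) _ (fun x hx => hagree i hi x
          (Finset.mem_union_left _ hx))]
        exact ((hS i) hi).1
      · apply List.rel_append (List.forall₂_refl (omegas k))
        refine List.Forall₂.cons (UEq.ofTy ?_) List.Forall₂.nil
        rw [← arrChain_append]
        apply arrChain_congr ?_ (TyEq.refl _)
        apply List.rel_append ?_ (List.forall₂_refl rest)
        rw [List.forall₂_iff_get]
        refine ⟨by simp [hlen2, hles], ?_⟩
        intro i h1 h2
        have hi : i < Ns.length := by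
          simp only [List.length_map] at h1; omega
        have e1 : (σs.map (substT s)).get ⟨i, h1⟩ = substT s (σs.getD i (.tvar 0)) := by
          simp only [List.get_eq_getElem, List.getElem_map]
          rw [List.getD_eq_getElem _ _ (by simp at h1 ⊢; omega)]
        have e2 : es.get ⟨i, h2⟩ = es.getD i (.tvar 0) := by
          simp only [List.get_eq_getElem]
          rw [List.getD_eq_getElem _ _ h2]
        rw [e1, e2]
        rw [substT_congr s (S i) _ (fun x hx => hagree i hi x
          (Finset.mem_union_right _ hx))]
        exact ((hS i) hi).2
    · show TyEq (s a) σ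
      rw [hsa]
      exact hty.symm

end DBIT
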